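/- There exist six points v₀, …, v₅ of the Euclidean plane in general position (pairwise distinct, no three collinear) such that the closed polygon with segments sᵢ = [vᵢ, v_{(i+1) mod 6}] has at least 7 crossing pairs, i.e., at least 7 unordered pairs of non-adjacent segments (indices with j ≢ i, i±1 (mod 6)) with nonempty intersection. -/

import Mathlib

private noncomputable def hexV : Fin 6 → EuclideanSpace ℝ (Fin 2) :=
  ![!₂[-4, -1], !₂[1, 2], !₂[-2, -5], !₂[2, -2], !₂[-3, 5], !₂[1, -6]]

private lemma cons_val_five {α : Type*} (a₀ a₁ a₂ a₃ a₄ a₅ : α) :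
    ![a₀, a₁, a₂, a₃, a₄, a₅] 5 = a₅ := rfl

private lemma cons_val_five' {α : Type*} (a₀ a₁ a₂ a₃ a₄ a₅ : α) (h : 5 < 6) :
    ![a₀, a₁, a₂, a₃, a₄, a₅] ⟨5, h⟩ = a₅ := rfl

private lemma cons_val_six_two {α : Type*} (a₀ a₁ a₂ a₃ a₄ a₅ : α) :
    ![a₀, a₁, a₂, a₃, a₄, a₅] 2 = a₂ := rfl

private lemma cons_val_six_three {α : Type*} (a₀ a₁ a₂ a₃ a₄ a₅ : α) :
    ![a₀, a₁, a₂, a₃, a₄, a₅] 3 = a₃ := rfl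

private lemma cons_val_six_four {α : Type*} (a₀ a₁ a₂ a₃ a₄ a₅ : α) :
    ![a₀, a₁, a₂, a₃, a₄, a₅] 4 = a₄ := rfl

private lemma hex_ext2 (a b : EuclideanSpace ℝ (Fin 2))
    (h0 : a 0 = b 0) (h1 : a 1 = b 1) : a = b := by
  ext k; fin_cases k; exacts [h0, h1]

private lemma hex_cross (a b c d : EuclideanSpace ℝ (Fin 2)) (t s : ℝ)
    (ht0 : 0 ≤ t) (ht1 : t ≤ 1) (hs0 : 0 ≤ s) (hs1 : s ≤ 1)
    (h : (1 - t) • a + t • b = (1 - s) • c + s • d) :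
    (segment ℝ a b ∩ segment ℝ c d).Nonempty :=
  ⟨(1 - t) • a + t • b, ⟨1 - t, t, by linarith, ht0, by ring, rfl⟩,
    ⟨1 - s, s, by linarith, hs0, by ring, h.symm⟩⟩

private lemma hex_notCollinear (a b c : EuclideanSpace ℝ (Fin 2))
    (h : (b 0 - a 0) * (c 1 - a 1) - (b 1 - a 1) * (c 0 - a 0) ≠ 0) :
    ¬ Collinear ℝ ({a, b, c} : Set (EuclideanSpace ℝ (Fin 2))) := by
  intro hc
  rw [collinear_iff_of_mem (Set.mem_insert a _)] at hc
  obtain ⟨w, hw⟩ := hc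
  obtain ⟨r₁, hr₁⟩ := hw b (by simp)
  obtain ⟨r₂, hr₂⟩ := hw c (by simp)
  apply h
  have hb0 : b 0 = r₁ * w 0 + a 0 := by rw [hr₁]; rfl
  have hb1 : b 1 = r₁ * w 1 + a 1 := by rw [hr₁]; rfl
  have hc0 : c 0 = r₂ * w 0 + a 0 := by rw [hr₂]; rfl
  have hc1 : c 1 = r₂ * w 1 + a 1 := by rw [hr₂]; rfl
  rw [hb0, hb1, hc0, hc1]; ring

/-- There exist six points in general position in the plane whose closed hexagon has at
least 7 crossing pairs: unordered pairs of non-adjacent sides with nonempty intersection. -/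
theorem exists_hexagon_seven_crossings :
    ∃ v : Fin 6 → EuclideanSpace ℝ (Fin 2),
      (∀ i j : Fin 6, i ≠ j → v i ≠ v j) ∧
      (∀ i j k : Fin 6, i ≠ j → j ≠ k → i ≠ k →
        ¬ Collinear ℝ ({v i, v j, v k} : Set (EuclideanSpace ℝ (Fin 2)))) ∧
      7 ≤ ({p : Fin 6 × Fin 6 | p.1 < p.2 ∧
        p.2 ≠ p.1 + 1 ∧ p.1 ≠ p.2 + 1 ∧
        (segment ℝ (v p.1) (v (p.1 + 1)) ∩
          segment ℝ (v p.2) (v (p.2 + 1))).Nonempty}).ncard := by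
  refine ⟨hexV, ?_, ?_, ?_⟩
  · intro i j hij h
    have h1 : hexV i 1 = hexV j 1 := by rw [h]
    fin_cases i <;> fin_cases j <;>
      first
        | exact absurd rfl hij
        | norm_num [hexV, cons_val_five, cons_val_five'] at h1
  · intro i j k hij hjk hik
    fin_cases i <;> fin_cases j <;> fin_cases k <;>
      first
        | exact absurd rfl hij
        | exact absurd rfl hjk
        | exact absurd rfl hik
        | (apply hex_notCollinear; norm_num [hexV, cons_val_five, cons_val_five'])
  · have hsub : (↑({(0,3),(0,4),(1,3),(1,4),(1,5),(2,4),(2,5)} :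
        Finset (Fin 6 × Fin 6)) : Set (Fin 6 × Fin 6)) ⊆
        {p : Fin 6 × Fin 6 | p.1 < p.2 ∧
          p.2 ≠ p.1 + 1 ∧ p.1 ≠ p.2 + 1 ∧
          (segment ℝ (hexV p.1) (hexV (p.1 + 1)) ∩
            segment ℝ (hexV p.2) (hexV (p.2 + 1))).Nonempty} := by
      intro p hp
      simp only [Finset.coe_insert, Set.mem_insert_iff, Finset.coe_singleton,
        Set.mem_singleton_iff] at hp
      rcases hp with rfl | rfl | rfl | rfl | rfl | rfl | rfl
      · exact ⟨by decide, by decide, by decide,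
          hex_cross (hexV 0) (hexV 1) (hexV 3) (hexV 4) (37/50) (23/50)
            (by norm_num) (by norm_num) (by norm_num) (by norm_num)
            (hex_ext2 _ _ (by norm_num [hexV, cons_val_five, cons_val_six_two, cons_val_six_three,
                cons_val_six_four, PiLp.add_apply, PiLp.smul_apply])
              (by norm_num [hexV, cons_val_five, cons_val_six_two, cons_val_six_three,
                cons_val_six_four, PiLp.add_apply, PiLp.smul_apply]))⟩
      · exact ⟨by decide, by decide, by decide,
          hex_cross (hexV 0) (hexV 1) (hexV 4) (hexV 5) (35/67) (27/67)
            (by norm_num) (by norm_num) (by norm_num) (by norm_num)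
            (hex_ext2 _ _ (by norm_num [hexV, cons_val_five, cons_val_six_two, cons_val_six_three,
                cons_val_six_four, PiLp.add_apply, PiLp.smul_apply])
              (by norm_num [hexV, cons_val_five, cons_val_six_two, cons_val_six_three,
                cons_val_six_four, PiLp.add_apply, PiLp.smul_apply]))⟩
      · exact ⟨by decide, by decide, by decide,
          hex_cross (hexV 1) (hexV 2) (hexV 3) (hexV 4) (13/56) (19/56)
            (by norm_num) (by norm_num) (by norm_num) (by norm_num)
            (hex_ext2 _ _ (by norm_num [hexV, cons_val_five, cons_val_six_two, cons_val_six_three,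
                cons_val_six_four, PiLp.add_apply, PiLp.smul_apply])
              (by norm_num [hexV, cons_val_five, cons_val_six_two, cons_val_six_three,
                cons_val_six_four, PiLp.add_apply, PiLp.smul_apply]))⟩
      · exact ⟨by decide, by decide, by decide,
          hex_cross (hexV 1) (hexV 2) (hexV 4) (hexV 5) (32/61) (37/61)
            (by norm_num) (by norm_num) (by norm_num) (by norm_num)
            (hex_ext2 _ _ (by norm_num [hexV, cons_val_five, cons_val_six_two, cons_val_six_three,
                cons_val_six_four, PiLp.add_apply, PiLp.smul_apply])
              (by norm_num [hexV, cons_val_five, cons_val_six_two, cons_val_six_three,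
                cons_val_six_four, PiLp.add_apply, PiLp.smul_apply]))⟩
      · exact ⟨by decide, by decide, by decide,
          hex_cross (hexV 1) (hexV 2) (hexV 5) (hexV 0) (4/5) (12/25)
            (by norm_num) (by norm_num) (by norm_num) (by norm_num)
            (hex_ext2 _ _ (by norm_num [hexV, cons_val_five, cons_val_six_two, cons_val_six_three,
                cons_val_six_four, PiLp.add_apply, PiLp.smul_apply])
              (by norm_num [hexV, cons_val_five, cons_val_six_two, cons_val_six_three,
                cons_val_six_four, PiLp.add_apply, PiLp.smul_apply]))⟩
      · exact ⟨by decide, by decide, by decide,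
          hex_cross (hexV 2) (hexV 3) (hexV 4) (hexV 5) (29/56) (43/56)
            (by norm_num) (by norm_num) (by norm_num) (by norm_num)
            (hex_ext2 _ _ (by norm_num [hexV, cons_val_five, cons_val_six_two, cons_val_six_three,
                cons_val_six_four, PiLp.add_apply, PiLp.smul_apply])
              (by norm_num [hexV, cons_val_five, cons_val_six_two, cons_val_six_three,
                cons_val_six_four, PiLp.add_apply, PiLp.smul_apply]))⟩
      · exact ⟨by decide, by decide, by decide,
          hex_cross (hexV 2) (hexV 3) (hexV 5) (hexV 0) (2/7) (13/35)
            (by norm_num) (by norm_num) (by norm_num) (by norm_num)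
            (hex_ext2 _ _ (by norm_num [hexV, cons_val_five, cons_val_six_two, cons_val_six_three,
                cons_val_six_four, PiLp.add_apply, PiLp.smul_apply])
              (by norm_num [hexV, cons_val_five, cons_val_six_two, cons_val_six_three,
                cons_val_six_four, PiLp.add_apply, PiLp.smul_apply]))⟩
    calc (7 : ℕ) = ({(0,3),(0,4),(1,3),(1,4),(1,5),(2,4),(2,5)} :
            Finset (Fin 6 × Fin 6)).card := by decide
      _ = (↑({(0,3),(0,4),(1,3),(1,4),(1,5),(2,4),(2,5)} :
            Finset (Fin 6 × Fin 6)) : Set (Fin 6 × Fin 6)).ncard :=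
          (Set.ncard_coe_finset _).symm
      _ ≤ _ := Set.ncard_le_ncard hsub (Set.toFinite _)
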